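/- For every real t with 0 < t < 1, the Gauss hypergeometric function satisfies ₂F₁(2, 2; 9/2; t) = −35(11t − 15)/(12t³) − 35(2t² − 7t + 5)·arcsin(√t) / (4 t^{7/2} √(1−t)). -/

import Mathlib

/-!
STATEMENT 11: For `0 < t < 1`,
`₂F₁(2, 2; 9/2; t) = -35(11t - 15)/(12t³)
   - 35(2t² - 7t + 5)·arcsin(√t) / (4 t^{7/2} √(1-t))`.
-/

noncomputable section
open Complex

/-- The Gauss hypergeometric series `₂F₁(a, b; c; t)`,
`∑_{n≥0} ((a)_n (b)_n / (c)_n) tⁿ/n!` with Pochhammer symbols `(x)_n`. -/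
def hyp2F1 (a b c t : ℂ) : ℂ :=
  ∑' n : ℕ, ((∏ i ∈ Finset.range n, ((a + i) * (b + i) / (c + i))) / (Nat.factorial n : ℂ)) * t ^ n

namespace HypAux11

open Real Set

/-- coefficients of ₂F₁(1,1;3/2;·) -/
def aa (n : ℕ) : ℝ := 4 ^ n * (n.factorial : ℝ) ^ 2 / ((2 * n + 1).factorial : ℝ)

lemma aa_pos (n : ℕ) : 0 < aa n := by
  have h1 : (0:ℝ) < (n.factorial : ℝ) := by exact_mod_cast n.factorial_pos
  have h2 : (0:ℝ) < ((2*n+1).factorial : ℝ) := by exact_mod_cast (2*n+1).factorial_pos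
  unfold aa; positivity

lemma aa_rec (n : ℕ) : aa (n + 1) = (2 * (n:ℝ) + 2) / (2 * (n:ℝ) + 3) * aa n := by
  unfold aa
  rw [show 2 * (n+1) + 1 = (2*n+1) + 1 + 1 by ring, Nat.factorial_succ ((2*n+1)+1),
    Nat.factorial_succ (2*n+1), Nat.factorial_succ n]
  have hf : ((2*n+1).factorial : ℝ) ≠ 0 := by
    exact_mod_cast (2*n+1).factorial_pos.ne'
  have hg : (n.factorial : ℝ) ≠ 0 := by exact_mod_cast n.factorial_pos.ne'
  have h3 : (2*(n:ℝ)+3) ≠ 0 := by positivity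
  push_cast
  field_simp
  ring

lemma aa_zero : aa 0 = 1 := by norm_num [aa, Nat.factorial]
lemma aa_one : aa 1 = 2/3 := by norm_num [aa, Nat.factorial]
lemma aa_two : aa 2 = 8/15 := by norm_num [aa, Nat.factorial]
lemma aa_three : aa 3 = 16/35 := by norm_num [aa, Nat.factorial]

lemma aa_le_one (n : ℕ) : aa n ≤ 1 := by
  induction n with
  | zero => simp [aa_zero]
  | succ n ih =>
    rw [aa_rec]
    have h0 := aa_pos n
    have h : (2*(n:ℝ)+2)/(2*(n:ℝ)+3) ≤ 1 := by
      rw [div_le_one (by positivity)]; linarith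
    calc (2*(n:ℝ)+2)/(2*(n:ℝ)+3) * aa n ≤ 1 * aa n := by
          apply mul_le_mul_of_nonneg_right h h0.le
      _ ≤ 1 := by rw [one_mul]; exact ih

lemma summable_aa_shift {t : ℝ} (h0 : 0 ≤ t) (h1 : t < 1) (k : ℕ) :
    Summable fun n : ℕ => aa (n+k) * t^n := by
  refine Summable.of_nonneg_of_le (fun n => mul_nonneg (aa_pos _).le (pow_nonneg h0 _))
    (fun n => ?_) (summable_geometric_of_lt_one h0 h1)
  calc aa (n+k) * t^n ≤ 1 * t^n :=
        mul_le_mul_of_nonneg_right (aa_le_one _) (pow_nonneg h0 n)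
    _ = t^n := one_mul _

lemma summable_lin_geom {q : ℝ} (h0 : 0 ≤ q) (h1 : q < 1) :
    Summable fun n : ℕ => (2*(n:ℝ)+1) * q^n := by
  have hn : ‖q‖ < 1 := by rwa [Real.norm_eq_abs, _root_.abs_of_nonneg h0]
  have h1' : Summable fun n : ℕ => (n:ℝ) * q^n := by
    simpa using summable_pow_mul_geometric_of_norm_lt_one 1 hn
  have h2 : Summable fun n : ℕ => q^n := summable_geometric_of_lt_one h0 h1
  exact ((h1'.mul_left 2).add h2).congr fun n => by ring

def HH (x : ℝ) : ℝ := ∑' n : ℕ, aa n * x ^ (2*n+1)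
def DD (x : ℝ) : ℝ := ∑' n : ℕ, (2*(n:ℝ)+1) * aa n * x ^ (2*n)

lemma sq_lt_one {x : ℝ} (hx : |x| < 1) : x^2 < 1 := by
  have := abs_nonneg x
  nlinarith [_root_.sq_abs x]

lemma summable_DD {x : ℝ} (hx : |x| < 1) :
    Summable fun n : ℕ => (2*(n:ℝ)+1) * aa n * x ^ (2*n) := by
  have hsum := summable_lin_geom (sq_nonneg x) (sq_lt_one hx)
  refine hsum.of_norm_bounded fun n => ?_
  have hx2 : x ^ (2*n) = (x^2)^n := by rw [pow_mul]
  have hnn : (0:ℝ) ≤ (2*(n:ℝ)+1) * aa n * x ^ (2*n) := by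
    have := (aa_pos n).le
    rw [hx2]; positivity
  rw [Real.norm_eq_abs, hx2, _root_.abs_of_nonneg (by rw [hx2] at hnn; exact hnn)]
  have h2 : (2*(n:ℝ)+1) * aa n ≤ (2*(n:ℝ)+1) * 1 :=
    mul_le_mul_of_nonneg_left (aa_le_one n) (by positivity)
  have := mul_le_mul_of_nonneg_right h2 (pow_nonneg (sq_nonneg x) n)
  linarith

lemma summable_HH {x : ℝ} (hx : |x| < 1) :
    Summable fun n : ℕ => aa n * x ^ (2*n+1) := by
  have hsum := (summable_geometric_of_lt_one (sq_nonneg x) (sq_lt_one hx)).mul_right |x|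
  refine hsum.of_norm_bounded fun n => ?_
  have hx2 : |x| ^ (2*n+1) = (x^2)^n * |x| := by
    rw [pow_succ, pow_mul, _root_.sq_abs]
  rw [Real.norm_eq_abs, abs_mul, _root_.abs_of_nonneg (aa_pos n).le, _root_.abs_pow, hx2]
  have h1 : aa n * ((x^2)^n * |x|) ≤ 1 * ((x^2)^n * |x|) :=
    mul_le_mul_of_nonneg_right (aa_le_one n) (by positivity)
  linarith

lemma hasDerivAt_HH {x : ℝ} (hx : |x| < 1) : HasDerivAt HH (DD x) x := by
  set r : ℝ := (|x| + 1)/2 with hr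
  have hxr : |x| < r := by rw [hr]; linarith
  have hr1 : r < 1 := by rw [hr]; linarith
  have hr0 : 0 ≤ r := by rw [hr]; positivity
  have hr2 : r^2 < 1 := by nlinarith
  have hu : Summable fun n : ℕ => (2*(n:ℝ)+1) * (r^2)^n :=
    summable_lin_geom (sq_nonneg r) hr2
  have hmem : x ∈ Ioo (-r) r := by
    constructor <;> [linarith [neg_abs_le x]; linarith [le_abs_self x]]
  have h0mem : (0:ℝ) ∈ Ioo (-r) r := by
    constructor <;> [linarith [abs_nonneg x]; linarith [abs_nonneg x]]
  unfold HH DD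
  refine hasDerivAt_tsum_of_isPreconnected (𝕜 := ℝ) (F := ℝ)
    (g := fun n z => aa n * z^(2*n+1)) (g' := fun n y => (2*(n:ℝ)+1) * aa n * y ^ (2*n))
    hu isOpen_Ioo (convex_Ioo _ _).isPreconnected
    (fun n y _ => ?_) (fun n y hy => ?_) h0mem ?_ hmem
  · have h := (hasDerivAt_pow (2*n+1) y).const_mul (aa n)
    refine h.congr_deriv ?_
    push_cast [Nat.add_sub_cancel]
    ring
  · have hyr : |y| ≤ r := by
      rw [abs_le]; exact ⟨hy.1.le, hy.2.le⟩
    have hy2 : y^2 ≤ r^2 := by nlinarith [abs_nonneg y, _root_.sq_abs y, le_abs_self y, neg_abs_le y]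
    have hnn : (0:ℝ) ≤ (2*(n:ℝ)+1) * aa n * y ^ (2*n) := by
      have := (aa_pos n).le
      rw [pow_mul]; positivity
    rw [Real.norm_eq_abs, _root_.abs_of_nonneg hnn, pow_mul]
    have h1 : (y^2)^n ≤ (r^2)^n := pow_le_pow_left₀ (sq_nonneg y) hy2 n
    have h2 : aa n * (y^2)^n ≤ 1 * (r^2)^n := by
      apply mul_le_mul (aa_le_one n) h1 (by positivity) (by norm_num)
    nlinarith [aa_pos n]
  · have : (fun n : ℕ => aa n * (0:ℝ)^(2*n+1)) = fun _ => (0:ℝ) := by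
      funext n; rw [zero_pow (by omega), mul_zero]
    rw [this]; exact summable_zero

lemma telescope {x : ℝ} (hx : |x| < 1) : (1 - x^2) * DD x - x * HH x = 1 := by
  set u : ℕ → ℝ := fun n => (2*(n:ℝ)+1) * aa n * x^(2*n) with hu
  have SU : Summable u := summable_DD hx
  have SU1 : Summable fun n => u (n+1) := (summable_nat_add_iff 1).mpr SU
  have SH : Summable fun n => aa n * x^(2*n+1) := summable_HH hx
  have e0 : ∑' n, u n = u 0 + ∑' n, u (n+1) := Summable.tsum_eq_zero_add SU
  have hterm : ∀ n : ℕ, (1-x^2) * u n - x * (aa n * x^(2*n+1)) = u n - u (n+1) := by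
    intro n
    simp only [hu]
    rw [aa_rec n]
    have h3 : (2*(n:ℝ)+3) ≠ 0 := by positivity
    rw [show 2*(n+1) = 2*n+1+1 by ring, pow_succ, pow_succ]
    push_cast
    field_simp
    ring
  have step1 : (1 - x^2) * DD x - x * HH x
      = ∑' n, ((1-x^2) * u n) - ∑' n, (x * (aa n * x^(2*n+1))) := by
    rw [DD, HH, ← tsum_mul_left, ← tsum_mul_left]
  rw [step1, ← Summable.tsum_sub (SU.mul_left _) (SH.mul_left _), tsum_congr hterm,
    Summable.tsum_sub SU SU1, e0]
  simp [hu, aa_zero]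

lemma HH_zero : HH 0 = 0 := by
  unfold HH
  rw [show (fun n : ℕ => aa n * (0:ℝ)^(2*n+1)) = fun _ => (0:ℝ) from
    funext fun n => by rw [zero_pow (by omega), mul_zero]]
  exact tsum_zero

lemma arcsin_key {x : ℝ} (h0 : 0 ≤ x) (h1 : x < 1) :
    Real.arcsin x = Real.sqrt (1 - x^2) * HH x := by
  set f : ℝ → ℝ := fun y => Real.arcsin y - Real.sqrt (1 - y^2) * HH y with hf
  have key : ∀ y ∈ Icc (0:ℝ) x, f y = f 0 := by
    apply constant_of_has_deriv_right_zero
    · -- continuity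
      apply ContinuousOn.sub Real.continuous_arcsin.continuousOn
      apply ContinuousOn.mul
      · exact (Real.continuous_sqrt.comp (continuous_const.sub (continuous_pow 2))).continuousOn
      · intro y hy
        have hy1 : |y| < 1 := by
          rw [abs_lt]; exact ⟨by linarith [hy.1], by linarith [hy.2]⟩
        exact (hasDerivAt_HH hy1).continuousAt.continuousWithinAt
    · intro y hy
      have hy0 : 0 ≤ y := hy.1
      have hy1 : y < 1 := lt_of_lt_of_le hy.2 h1.le
      have hya : |y| < 1 := by rw [abs_lt]; constructor <;> linarith
      have h1y : (0:ℝ) < 1 - y^2 := by nlinarith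
      have hs : (0:ℝ) < Real.sqrt (1-y^2) := Real.sqrt_pos.mpr h1y
      have hs2 : Real.sqrt (1-y^2)^2 = 1 - y^2 := Real.sq_sqrt h1y.le
      have hyd : HasDerivAt HH (DD y) y := hasDerivAt_HH hya
      have hsq : HasDerivAt (fun z : ℝ => Real.sqrt (1 - z^2)) (-y / Real.sqrt (1-y^2)) y := by
        have hinner : HasDerivAt (fun z : ℝ => 1 - z^2) (-(2*y)) y := by
          simpa using ((hasDerivAt_pow 2 y).const_sub 1)
        have h := (Real.hasDerivAt_sqrt h1y.ne').comp y hinner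
        refine h.congr_deriv ?_
        field_simp
      have harc : HasDerivAt Real.arcsin (1 / Real.sqrt (1 - y^2)) y :=
        Real.hasDerivAt_arcsin (by linarith) (by linarith)
      have hder : HasDerivAt f
          (1 / Real.sqrt (1-y^2) - ((-y / Real.sqrt (1-y^2)) * HH y + Real.sqrt (1-y^2) * DD y)) y :=
        harc.sub (hsq.mul hyd)
      have htel := telescope hya
      have hval : 1 / Real.sqrt (1-y^2) - ((-y / Real.sqrt (1-y^2)) * HH y + Real.sqrt (1-y^2) * DD y) = 0 := by
        field_simp
        linear_combination -htel - DD y * hs2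
      rw [hval] at hder
      exact hder.hasDerivWithinAt
  have hx := key x ⟨h0, le_refl x⟩
  have hf0 : f 0 = 0 := by
    simp [hf, HH_zero, Real.arcsin_zero]
  rw [hf0] at hx
  have : Real.arcsin x - Real.sqrt (1 - x^2) * HH x = 0 := hx
  linarith


def cc (n : ℕ) : ℝ :=
  (∏ i ∈ Finset.range n, ((2 + (i:ℝ)) * (2 + (i:ℝ)) / (9/2 + (i:ℝ)))) / (n.factorial : ℝ)

lemma cc_key (n : ℕ) : cc n = (35/4) * (-2 * aa (n+1) + 7 * aa (n+2) - 5 * aa (n+3)) := by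
  induction n with
  | zero =>
    have : cc 0 = 1 := by simp [cc, Nat.factorial]
    rw [this, aa_one, aa_two, aa_three]
    norm_num
  | succ n ih =>
    have hfne : (n.factorial : ℝ) ≠ 0 := by exact_mod_cast n.factorial_pos.ne'
    have hn1 : ((n:ℝ) + 1) ≠ 0 := by positivity
    have hd : (9/2 + (n:ℝ)) ≠ 0 := by positivity
    have hstep : cc (n+1) = cc n * ((2+(n:ℝ))*(2+(n:ℝ))/(9/2+(n:ℝ))) / ((n:ℝ)+1) := by
      unfold cc
      rw [Finset.prod_range_succ, Nat.factorial_succ]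
      push_cast
      field_simp
    rw [hstep, ih,
      show n+1+1 = n+2 by ring, show n+1+2 = n+3 by ring, show n+1+3 = n+4 by ring,
      show (n+4) = (n+3)+1 by ring, aa_rec (n+3),
      show (n+3) = (n+2)+1 by ring, aa_rec (n+2),
      show (n+2) = (n+1)+1 by ring, aa_rec (n+1)]
    push_cast
    have d1 : (2*((n:ℝ)+1)+3) ≠ 0 := by positivity
    have d2 : (2*((n:ℝ)+2)+3) ≠ 0 := by positivity
    have d3 : (2*((n:ℝ)+3)+3) ≠ 0 := by positivity
    field_simp
    ring

lemma real_main {t : ℝ} (h0 : 0 < t) (h1 : t < 1) :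
    ∑' n : ℕ, cc n * t^n =
      -(35 * (11*t - 15)) / (12 * t^3)
        - 35*(2*t^2 - 7*t + 5) * Real.arcsin (Real.sqrt t)
          / (4 * t ^ ((7:ℝ)/2) * Real.sqrt (1-t)) := by
  have ht0 : (0:ℝ) ≤ t := h0.le
  have hs : 0 < Real.sqrt t := Real.sqrt_pos.mpr h0
  have hs2 : Real.sqrt t ^ 2 = t := Real.sq_sqrt ht0
  have hslt : Real.sqrt t < 1 := by nlinarith
  have hw : 0 < Real.sqrt (1-t) := Real.sqrt_pos.mpr (by linarith)
  have S0 : Summable fun n : ℕ => aa n * t^n := by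
    simpa using summable_aa_shift ht0 h1 0
  have S1 := summable_aa_shift ht0 h1 1
  have S2 := summable_aa_shift ht0 h1 2
  have S3 := summable_aa_shift ht0 h1 3
  set F := ∑' n : ℕ, aa n * t^n with hFdef
  set T1 := ∑' n : ℕ, aa (n+1) * t^n with hT1def
  set T2 := ∑' n : ℕ, aa (n+2) * t^n with hT2def
  set T3 := ∑' n : ℕ, aa (n+3) * t^n with hT3def
  have shift : ∀ (g : ℕ → ℝ), ∑' n : ℕ, g (n+1) * t^(n+1) = (∑' n : ℕ, g (n+1) * t^n) * t := by
    intro g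
    rw [← tsum_mul_right]
    exact tsum_congr fun n => by rw [pow_succ]; ring
  have e1 : F = 1 + T1 * t := by
    rw [hFdef, Summable.tsum_eq_zero_add S0, aa_zero, pow_zero, one_mul, shift (fun n => aa n)]
  have e2 : T1 = 2/3 + T2 * t := by
    rw [hT1def, Summable.tsum_eq_zero_add S1, aa_one, pow_zero,
      show (∑' n : ℕ, aa (n+1+1) * t^(n+1)) = ∑' n : ℕ, aa (n+2) * t^(n+1) from
        tsum_congr fun n => by norm_num [show n+1+1 = n+2 from by ring],
      shift (fun n => aa (n+1))]
    norm_num [add_assoc, hT2def]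
  have e3 : T2 = 8/15 + T3 * t := by
    rw [hT2def, Summable.tsum_eq_zero_add S2, aa_two, pow_zero, shift (fun n => aa (n+2))]
    norm_num [add_assoc, hT3def]
  have hmain : HasSum (fun n : ℕ => cc n * t^n) ((-35/2) * T1 + ((245/4) * T2 + (-175/4) * T3)) := by
    have h := (S1.hasSum.mul_left (-35/2)).add
      ((S2.hasSum.mul_left (245/4)).add (S3.hasSum.mul_left (-175/4)))
    have hfe : (fun n : ℕ => cc n * t^n)
        = fun n => (-35/2) * (aa (n+1) * t^n) + ((245/4) * (aa (n+2) * t^n) + (-175/4) * (aa (n+3) * t^n)) :=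
      funext fun n => by rw [cc_key n]; ring
    rw [hfe]
    exact h
  rw [hmain.tsum_eq]
  have harc : Real.arcsin (Real.sqrt t) = Real.sqrt (1-t) * (F * Real.sqrt t) := by
    rw [arcsin_key (Real.sqrt_nonneg t) hslt, hs2]
    congr 1
    unfold HH
    rw [hFdef, ← tsum_mul_right]
    exact tsum_congr fun n => by rw [pow_succ, pow_mul, hs2]; ring
  have hr : t ^ ((7:ℝ)/2) = t^3 * Real.sqrt t := by
    rw [show (7:ℝ)/2 = ((3:ℕ):ℝ) + (1/2 : ℝ) by norm_num, Real.rpow_add h0,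
      Real.rpow_natCast, Real.sqrt_eq_rpow]
  rw [hr, harc, e1, e2, e3]
  have hts : t ≠ 0 := h0.ne'
  have hss : Real.sqrt t ≠ 0 := hs.ne'
  have hws : Real.sqrt (1-t) ≠ 0 := hw.ne'
  field_simp
  ring


end HypAux11

theorem hyp2F1_two_two_nine_half (t : ℝ) (h0 : 0 < t) (h1 : t < 1) :
    hyp2F1 2 2 (9 / 2) (t : ℂ) =
      -(((35 * (11 * t - 15)) : ℝ) : ℂ) / ((12 * t ^ 3 : ℝ) : ℂ) -
        (((35 * (2 * t ^ 2 - 7 * t + 5) * Real.arcsin (Real.sqrt t)) : ℝ) : ℂ) /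
          (((4 * t ^ ((7 : ℝ) / 2) * Real.sqrt (1 - t)) : ℝ) : ℂ) := by
  have hterm : ∀ n : ℕ,
      ((∏ i ∈ Finset.range n, ((2 + (i:ℂ)) * (2 + (i:ℂ)) / (9 / 2 + (i:ℂ)))) /
          (Nat.factorial n : ℂ)) * (t:ℂ) ^ n = ((HypAux11.cc n * t ^ n : ℝ) : ℂ) := by
    intro n
    unfold HypAux11.cc
    push_cast
    ring
  have hL : hyp2F1 2 2 (9 / 2) (t : ℂ) = ((∑' n : ℕ, HypAux11.cc n * t ^ n : ℝ) : ℂ) := by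
    unfold hyp2F1
    rw [Complex.ofReal_tsum]
    exact tsum_congr hterm
  rw [hL, HypAux11.real_main h0 h1]
  push_cast
  ring
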